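/- For β(t) ∈ ℤ_p with p-adic valuation m = val_p(β(t)) ≥ 0, and for any real ρ with p^{-1} < ρ < 1, the multiplicative ρ-Gauss norm of (1+b)^{β(t)} − 1 = Σ_{i≥1} C(β(t), i) b^i in the ring of power series over ℚ_p satisfies ‖(1+b)^{β(t)} − 1‖_ρ = max_{0 ≤ j ≤ m} ρ^{p^j} p^{j−m}. -/

import Mathlib

open Finset
variable {p : ℕ} [hp : Fact p.Prime]

private lemma prod_eq_descPochhammer' (x : ℤ_[p]) (k : ℕ) :
    ∏ t ∈ Finset.range k, (x - (t : ℤ_[p])) = (descPochhammer ℤ_[p] k).eval x := by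
  induction k with
  | zero => simp
  | succ k ih => rw [Finset.prod_range_succ, ih, descPochhammer_succ_eval]

private lemma padicNormProdLe (x : ℤ_[p]) (k : ℕ) :
    ‖∏ t ∈ Finset.range k, ((x : ℚ_[p]) - (t : ℚ_[p]))‖ ≤ ‖(k.factorial : ℚ_[p])‖ := by
  have h1 : ∏ t ∈ Finset.range k, ((x : ℚ_[p]) - (t : ℚ_[p]))
      = ((∏ t ∈ Finset.range k, (x - (t : ℤ_[p])) : ℤ_[p]) : ℚ_[p]) := by
    induction k with
    | zero => simp
    | succ k ih =>
      rw [Finset.prod_range_succ, Finset.prod_range_succ, ih, PadicInt.coe_mul,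
        PadicInt.coe_sub, PadicInt.coe_natCast]
  rw [h1, prod_eq_descPochhammer', descPochhammer_eval_eq_ascPochhammer,
    PadicInt.padic_norm_e_of_padicInt]
  have h2 : ((k.factorial : ℤ_[p]) : ℚ_[p]) = (k.factorial : ℚ_[p]) := by push_cast; rfl
  rw [← h2, PadicInt.padic_norm_e_of_padicInt]
  exact PadicInt.norm_ascPochhammer_le k _


private lemma norm_coe_eq' (n : ℤ_[p]) (hn : n ≠ 0) (m : ℕ) (hm : n.valuation = m) :
    ‖(n : ℚ_[p])‖ = (p : ℝ) ^ (-(m : ℤ)) := by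
  rw [PadicInt.padic_norm_e_of_padicInt, PadicInt.norm_eq_zpow_neg_valuation hn, hm]

private lemma norm_natCast' (t : ℕ) (ht : t ≠ 0) :
    ‖(t : ℚ_[p])‖ = (p : ℝ) ^ (-(padicValNat p t : ℤ)) := by
  rw [Padic.norm_eq_zpow_neg_valuation (by exact_mod_cast ht), Padic.valuation_natCast]

private lemma key_sub_norm (n : ℤ_[p]) (hn : n ≠ 0) (m : ℕ) (hm : n.valuation = m)
    (j : ℕ) (hj : j ≤ m) (t : ℕ) (ht : t ≠ 0) (htlt : t < p ^ j) :
    ‖(n : ℚ_[p]) - (t : ℚ_[p])‖ = ‖(t : ℚ_[p])‖ := by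
  have hp1 : 1 < p := hp.out.one_lt
  have hv : padicValNat p t < j := by
    by_contra h
    push_neg at h
    have h2 : p ^ j ≤ p ^ padicValNat p t := Nat.pow_le_pow_right (le_of_lt hp1) h
    have h3 : p ^ padicValNat p t ≤ t := Nat.le_of_dvd (Nat.pos_of_ne_zero ht) pow_padicValNat_dvd
    omega
  have h1 : ‖(n : ℚ_[p])‖ < ‖(t : ℚ_[p])‖ := by
    rw [norm_coe_eq' n hn m hm, norm_natCast' t ht]
    have : 1 < (p : ℝ) := by exact_mod_cast hp1
    apply zpow_lt_zpow_right₀ this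
    omega
  have h2 : ‖(n : ℚ_[p])‖ ≠ ‖(-(t : ℚ_[p]))‖ := by rw [norm_neg]; exact ne_of_lt h1
  have h3 : (n : ℚ_[p]) - (t : ℚ_[p]) = (n : ℚ_[p]) + (-(t : ℚ_[p])) := by ring
  rw [h3, Padic.add_eq_max_of_ne h2, norm_neg, max_eq_right h1.le]

private lemma norm_ratio_pow' (n : ℤ_[p]) (hn : n ≠ 0) (m : ℕ) (hm : n.valuation = m)
    (j : ℕ) (hj : j ≤ m) :
    ‖(∏ t ∈ Finset.range (p ^ j), ((n : ℚ_[p]) - (t : ℚ_[p]))) / ((p ^ j).factorial : ℚ_[p])‖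
      = (p : ℝ) ^ ((j : ℤ) - (m : ℤ)) := by
  have hp1 : 1 < p := hp.out.one_lt
  have hNpos : 0 < p ^ j := pow_pos (by omega) j
  obtain ⟨K, hK⟩ : ∃ K, p ^ j = K + 1 := ⟨p ^ j - 1, by omega⟩
  set P : ℝ := ∏ t ∈ Finset.range K, ‖((t + 1 : ℕ) : ℚ_[p])‖ with hP
  have hPpos : 0 < P :=
    Finset.prod_pos (fun t _ => norm_pos_iff.mpr (by exact_mod_cast (Nat.succ_ne_zero t)))
  have hpR : (p : ℝ) ≠ 0 := by exact_mod_cast (by omega : p ≠ 0)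
  have hnum : ‖∏ t ∈ Finset.range (p ^ j), ((n : ℚ_[p]) - (t : ℚ_[p]))‖
      = P * (p : ℝ) ^ (-(m : ℤ)) := by
    rw [hK, Finset.prod_range_succ', norm_mul, norm_prod]
    congr 1
    · apply Finset.prod_congr rfl
      intro t ht'
      have htmem := Finset.mem_range.mp ht'
      rw [key_sub_norm n hn m hm j hj (t + 1) (Nat.succ_ne_zero t) (by omega)]
    · simpa using norm_coe_eq' n hn m hm
  have hden : ‖((p ^ j).factorial : ℚ_[p])‖ = P * (p : ℝ) ^ (-(j : ℤ)) := by
    have hfac : ((p ^ j).factorial : ℚ_[p]) = ∏ t ∈ Finset.range (p ^ j), ((t + 1 : ℕ) : ℚ_[p]) := by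
      rw [← Nat.cast_prod]
      congr 1
      exact (Finset.prod_range_add_one_eq_factorial _).symm
    rw [hfac, hK, Finset.prod_range_succ, norm_mul, norm_prod]
    congr 1
    rw [show ((K + 1 : ℕ) : ℚ_[p]) = ((p : ℚ_[p])) ^ j by rw [← hK]; push_cast; ring,
      Padic.norm_p_pow]
  rw [norm_div, hnum, hden, mul_div_mul_left _ _ (ne_of_gt hPpos),
    ← zpow_sub₀ hpR]
  congr 1
  ring

private lemma norm_ratio_le' (n : ℤ_[p]) (hn : n ≠ 0) (m : ℕ) (hm : n.valuation = m)
    (k : ℕ) (hk : k ≠ 0) :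
    ‖(∏ t ∈ Finset.range k, ((n : ℚ_[p]) - (t : ℚ_[p]))) / (k.factorial : ℚ_[p])‖
      ≤ (p : ℝ) ^ ((min (padicValNat p k) m : ℤ) - (m : ℤ)) := by
  have hp1 : 1 < p := hp.out.one_lt
  have hpR : (p : ℝ) ≠ 0 := by exact_mod_cast (by omega : p ≠ 0)
  set v := padicValNat p k with hv
  rcases le_or_gt m v with hvm | hvm
  · rw [min_eq_right (by exact_mod_cast hvm : ((m:ℤ)) ≤ (v:ℤ)), sub_self, zpow_zero, norm_div]
    have hfacpos : 0 < ‖(k.factorial : ℚ_[p])‖ :=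
      norm_pos_iff.mpr (by exact_mod_cast k.factorial_ne_zero)
    rw [div_le_one hfacpos]
    exact padicNormProdLe n k
  · rw [min_eq_left (by exact_mod_cast hvm.le : ((v:ℤ)) ≤ (m:ℤ))]
    obtain ⟨K, hK⟩ : ∃ K, k = K + 1 := ⟨k - 1, by omega⟩
    have hsplit : ∏ t ∈ Finset.range k, ((n : ℚ_[p]) - (t : ℚ_[p]))
        = (∏ t ∈ Finset.range K, (((n - 1 : ℤ_[p]) : ℚ_[p]) - (t : ℚ_[p])))
          * ((n : ℚ_[p]) - ((0 : ℕ) : ℚ_[p])) := by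
      rw [hK, Finset.prod_range_succ']
      congr 1
      apply Finset.prod_congr rfl
      intro t _
      push_cast
      ring
    have hA := padicNormProdLe (n - 1) K
    have hkn : ‖(k : ℚ_[p])‖ = (p : ℝ) ^ (-(v : ℤ)) := norm_natCast' k hk
    have hfack : (k.factorial : ℚ_[p]) = (k : ℚ_[p]) * (K.factorial : ℚ_[p]) := by
      rw [hK, Nat.factorial_succ]
      push_cast
      ring
    have hBpos : 0 < ‖(K.factorial : ℚ_[p])‖ :=
      norm_pos_iff.mpr (by exact_mod_cast K.factorial_ne_zero)
    have hCpos : 0 < ‖(k : ℚ_[p])‖ := norm_pos_iff.mpr (by exact_mod_cast hk)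
    rw [norm_div, hsplit, norm_mul, hfack, norm_mul, Nat.cast_zero, sub_zero,
      norm_coe_eq' n hn m hm]
    calc ‖∏ t ∈ Finset.range K, (((n - 1 : ℤ_[p]) : ℚ_[p]) - (t : ℚ_[p]))‖ * (p : ℝ) ^ (-(m : ℤ))
          / (‖(k : ℚ_[p])‖ * ‖(K.factorial : ℚ_[p])‖)
        ≤ ‖(K.factorial : ℚ_[p])‖ * (p : ℝ) ^ (-(m : ℤ))
          / (‖(k : ℚ_[p])‖ * ‖(K.factorial : ℚ_[p])‖) := by
          apply div_le_div_of_nonneg_right ?_ (by positivity)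
          exact mul_le_mul_of_nonneg_right hA (by positivity)
      _ = (p : ℝ) ^ (-(m : ℤ)) / ‖(k : ℚ_[p])‖ := by
          field_simp
      _ = (p : ℝ) ^ ((v : ℤ) - (m : ℤ)) := by
          rw [hkn, ← zpow_sub₀ hpR]
          congr 1
          ring

/-- For `n ∈ ℤ_p` with valuation `m ≥ 0` and `p⁻¹ < ρ < 1`, the `ρ`-Gauss norm of
`(1+b)^n − 1 = Σ_{i≥1} C(n,i) bⁱ`, i.e. `sup_{i ≥ 1} |C(n,i)| ρⁱ`, equals
`max_{0 ≤ j ≤ m} ρ^{p^j} p^{j−m}`. -/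
theorem stmt10 (p : ℕ) [Fact p.Prime] (n : ℤ_[p]) (hn : n ≠ 0)
    (m : ℕ) (hm : n.valuation = m)
    (ρ : ℝ) (hρ1 : (p : ℝ)⁻¹ < ρ) (hρ2 : ρ < 1) :
    (⨆ i : ℕ, ‖(∏ j ∈ Finset.range (i + 1), ((n : ℚ_[p]) - (j : ℚ_[p]))) /
        ((i + 1).factorial : ℚ_[p])‖ * ρ ^ (i + 1)) =
      ⨆ j : Fin (m + 1), ρ ^ (p ^ (j : ℕ)) * (p : ℝ) ^ (((j : ℕ) : ℤ) - (m : ℤ)) := by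
  have hp1 : 1 < p := (Fact.out : p.Prime).one_lt
  have hppos : (0 : ℝ) < p := by exact_mod_cast (by omega : 0 < p)
  have hρ0 : 0 < ρ := lt_trans (by positivity) hρ1
  set f : ℕ → ℝ := fun i => ‖(∏ j ∈ Finset.range (i + 1), ((n : ℚ_[p]) - (j : ℚ_[p]))) /
        ((i + 1).factorial : ℚ_[p])‖ * ρ ^ (i + 1) with hf
  set g : Fin (m + 1) → ℝ :=
    fun j => ρ ^ (p ^ (j : ℕ)) * (p : ℝ) ^ (((j : ℕ) : ℤ) - (m : ℤ)) with hg
  have hbound : ∀ i : ℕ, f i ≤ g ⟨min (padicValNat p (i + 1)) m, by omega⟩ := by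
    intro i
    set v := padicValNat p (i + 1) with hv
    have hj0 : p ^ min v m ≤ i + 1 := by
      have h1 : p ^ v ∣ (i + 1) := pow_padicValNat_dvd
      have h2 : p ^ min v m ≤ p ^ v := Nat.pow_le_pow_right (by omega) (min_le_left _ _)
      exact le_trans h2 (Nat.le_of_dvd (by omega) h1)
    have hρle : ρ ^ (i + 1) ≤ ρ ^ (p ^ min v m) :=
      pow_le_pow_of_le_one hρ0.le hρ2.le hj0
    have hnle := norm_ratio_le' n hn m hm (i + 1) (Nat.succ_ne_zero i)
    calc f i ≤ (p : ℝ) ^ ((min v m : ℤ) - (m : ℤ)) * ρ ^ (p ^ min v m) := by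
          apply mul_le_mul hnle hρle (by positivity) (by positivity)
      _ = g ⟨min v m, by omega⟩ := by
          simp only [hg]
          push_cast
          ring
  have hgbdd : BddAbove (Set.range g) := Set.Finite.bddAbove (Set.finite_range g)
  have hub : ∀ i : ℕ, f i ≤ ⨆ j, g j := fun i => le_trans (hbound i) (le_ciSup hgbdd _)
  have hfbdd : BddAbove (Set.range f) := by
    refine ⟨⨆ j, g j, ?_⟩
    rintro y ⟨i, rfl⟩
    exact hub i
  apply le_antisymm
  · exact ciSup_le hub
  · apply ciSup_le
    intro j
    have hjm : (j : ℕ) ≤ m := Nat.lt_succ_iff.mp j.isLt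
    have hpj : 0 < p ^ (j : ℕ) := pow_pos (by omega) _
    have h1 : p ^ (j : ℕ) - 1 + 1 = p ^ (j : ℕ) := Nat.succ_pred_eq_of_pos hpj
    have hgj : g j = f (p ^ (j : ℕ) - 1) := by
      simp only [hf, hg, h1]
      rw [norm_ratio_pow' n hn m hm (j : ℕ) hjm]
      ring
    rw [hgj]
    exact le_ciSup hfbdd _
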